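/- arXiv:2211.08827 — 6 statements merged into one kernel-verified Lean document; each statement's English description precedes it below -/
import Mathlib

section
/- Under the hypotheses of the previous statement (x_d' = f_d + Σᵢ ηᵢQᵢx_d with Qᵢ symmetric, QᵢQⱼ = 0 for i ≠ j, Qᵢ² = kQᵢ), assume additionally that k ≠ 0 and that Ψ_j(t) = x_d(t)ᵀQ_j x_d(t) > 0 for all t. Define ξ_j(t) = ln Ψ_j(t) and β_j(t) = α_j(t)/Ψ_j(t) where α_j(t) = f_d(t)ᵀQ_j x_d(t) + x_d(t)ᵀQ_j f_d(t). Then ξ_j is differentiable, ξ_j'(t) = β_j(t) + 2k·η_j(t), and consequently η_j(t) = (ξ_j'(t) − β_j(t))/(2k) for all t. -/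
open Matrix

lemma quad_hasDerivAt {n : ℕ} (M : Matrix (Fin n) (Fin n) ℝ)
    (x : ℝ → Fin n → ℝ) (v : Fin n → ℝ) (t : ℝ) (hx : HasDerivAt x v t) :
    HasDerivAt (fun s => x s ⬝ᵥ M.mulVec (x s))
      (v ⬝ᵥ M.mulVec (x t) + x t ⬝ᵥ M.mulVec v) t := by
  have hcoord : ∀ a, HasDerivAt (fun s => x s a) (v a) t := hasDerivAt_pi.1 hx
  have h : HasDerivAt (fun s => ∑ a, x s a * ∑ b, M a b * x s b)
      (∑ a, (v a * ∑ b, M a b * x t b + x t a * ∑ b, M a b * v b)) t := by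
    apply HasDerivAt.fun_sum
    intro a _
    exact (hcoord a).mul (HasDerivAt.fun_sum fun b _ => (hcoord b).const_mul (M a b))
  have hfun : (fun s => x s ⬝ᵥ M.mulVec (x s))
      = fun s => ∑ a, x s a * ∑ b, M a b * x s b := by
    funext s; simp [dotProduct, Matrix.mulVec]
  rw [hfun]
  convert h using 1
  rw [Finset.sum_add_distrib]
  simp [dotProduct, Matrix.mulVec]

lemma mulVec_dot {n : ℕ} (A B : Matrix (Fin n) (Fin n) ℝ) (hA : Aᵀ = A)
    (x y : Fin n → ℝ) : A.mulVec x ⬝ᵥ B.mulVec y = x ⬝ᵥ (A * B).mulVec y := by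
  have h1 : A *ᵥ x = x ᵥ* A := by
    nth_rewrite 1 [← hA]
    exact Matrix.mulVec_transpose A x
  rw [Matrix.dotProduct_mulVec, Matrix.dotProduct_mulVec, ← Matrix.vecMul_vecMul, h1]

lemma sum_dotProduct' {n m : ℕ} (f : Fin m → Fin n → ℝ) (w : Fin n → ℝ) :
    (∑ i, f i) ⬝ᵥ w = ∑ i, f i ⬝ᵥ w := by
  simp only [dotProduct, Finset.sum_apply, Finset.sum_mul]
  exact Finset.sum_comm

lemma dotProduct_sum' {n m : ℕ} (f : Fin m → Fin n → ℝ) (w : Fin n → ℝ) :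
    w ⬝ᵥ (∑ i, f i) = ∑ i, w ⬝ᵥ f i := by
  simp only [dotProduct, Finset.sum_apply, Finset.mul_sum]
  exact Finset.sum_comm

theorem log_quadratic_form_dynamics {n m : ℕ} (hn : 1 ≤ n) (hm : 1 ≤ m) (k : ℝ)
    (hk : k ≠ 0)
    (Q : Fin m → Matrix (Fin n) (Fin n) ℝ)
    (hsym : ∀ i, (Q i)ᵀ = Q i)
    (horth : ∀ i j, i ≠ j → Q i * Q j = 0)
    (hidem : ∀ i, Q i * Q i = k • Q i)
    (xd fd : ℝ → Fin n → ℝ) (η : Fin m → ℝ → ℝ)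
    (hxd : Differentiable ℝ xd)
    (hode : ∀ t : ℝ, deriv xd t = fd t + ∑ i, η i t • (Q i).mulVec (xd t))
    (Ψ α : Fin m → ℝ → ℝ)
    (hΨ : ∀ j t, Ψ j t = xd t ⬝ᵥ (Q j).mulVec (xd t))
    (hα : ∀ j t, α j t = fd t ⬝ᵥ (Q j).mulVec (xd t) + xd t ⬝ᵥ (Q j).mulVec (fd t))
    (hpos : ∀ j t, 0 < Ψ j t)
    (ξ β : Fin m → ℝ → ℝ)
    (hξ : ∀ j t, ξ j t = Real.log (Ψ j t))
    (hβ : ∀ j t, β j t = α j t / Ψ j t) :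
    ∀ j, Differentiable ℝ (ξ j) ∧
      (∀ t : ℝ, deriv (ξ j) t = β j t + 2 * k * η j t) ∧
      (∀ t : ℝ, η j t = (deriv (ξ j) t - β j t) / (2 * k)) := by
  intro j
  -- derivative of Ψ j
  have hΨd : ∀ t, HasDerivAt (Ψ j) (α j t + 2 * k * η j t * Ψ j t) t := by
    intro t
    have hx : HasDerivAt xd (deriv xd t) t := (hxd t).hasDerivAt
    have h := quad_hasDerivAt (Q j) xd (deriv xd t) t hx
    have hfun : (Ψ j) = fun s => xd s ⬝ᵥ (Q j).mulVec (xd s) := funext (hΨ j)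
    rw [← hfun] at h
    convert h using 1
    rw [hode t]
    have hcross : ∀ i, ((Q i).mulVec (xd t)) ⬝ᵥ (Q j).mulVec (xd t)
        = (if i = j then k * Ψ j t else 0) := by
      intro i
      rw [mulVec_dot (Q i) (Q j) (hsym i)]
      by_cases hij : i = j
      · subst hij
        simp [hidem i, Matrix.smul_mulVec, hΨ i t, dotProduct_smul,
          smul_eq_mul]
      · simp [horth i j hij, hij]
    have hcross2 : ∀ i, xd t ⬝ᵥ (Q j).mulVec ((Q i).mulVec (xd t))
        = (if i = j then k * Ψ j t else 0) := by
      intro i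
      rw [Matrix.mulVec_mulVec]
      by_cases hij : i = j
      · subst hij
        simp [hidem i, Matrix.smul_mulVec, hΨ i t, dotProduct_smul,
          smul_eq_mul]
      · simp [horth j i (Ne.symm hij), hij]
    rw [add_dotProduct, Matrix.mulVec_add, dotProduct_add, sum_dotProduct']
    have e1 : ∑ i, (η i t • (Q i).mulVec (xd t)) ⬝ᵥ (Q j).mulVec (xd t)
        = k * η j t * Ψ j t := by
      rw [Finset.sum_eq_single j]
      · rw [smul_dotProduct, hcross j]; simp; ring
      · intro i _ hij
        rw [smul_dotProduct, hcross i, if_neg hij, smul_zero]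
      · simp
    have e2 : xd t ⬝ᵥ (Q j).mulVec (∑ i, η i t • (Q i).mulVec (xd t))
        = k * η j t * Ψ j t := by
      have hmv : (Q j) *ᵥ (∑ i, η i t • (Q i) *ᵥ xd t)
          = ∑ i, (Q j) *ᵥ (η i t • (Q i) *ᵥ xd t) := by
        funext a
        simp only [Matrix.mulVec, dotProduct, Finset.sum_apply, Finset.mul_sum]
        exact Finset.sum_comm
      rw [hmv, dotProduct_sum']
      rw [Finset.sum_eq_single j]
      · rw [Matrix.mulVec_smul, dotProduct_smul, hcross2 j]; simp; ring
      · intro i _ hij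
        rw [Matrix.mulVec_smul, dotProduct_smul, hcross2 i, if_neg hij, smul_zero]
      · simp
    rw [e1, e2, hα j t]
    ring
  have hξd : ∀ t, HasDerivAt (ξ j) ((α j t + 2 * k * η j t * Ψ j t) / Ψ j t) t := by
    intro t
    have h := (Real.hasDerivAt_log (hpos j t).ne').comp t (hΨd t)
    have hfun : (ξ j) = Real.log ∘ (Ψ j) := funext (hξ j)
    rw [hfun]
    convert h using 1
    · rfl
    · rfl
    · ring
  have hderiv : ∀ t, deriv (ξ j) t = β j t + 2 * k * η j t := by
    intro t
    rw [(hξd t).deriv, hβ j t]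
    have hne := (hpos j t).ne'
    field_simp
  refine ⟨fun t => (hξd t).differentiableAt, hderiv, fun t => ?_⟩
  rw [hderiv t]
  field_simp
  ring
end

section
/- Let γ > 0, ω > 0, c > 0, and let φ : [0,∞) → ℝ be continuous with ∫₀ᵗ φ(s)² ds ≥ c·t for all t ≥ 0. Set v = ω², q(t) = φ(t)·v, and let v̂ : [0,∞) → ℝ be differentiable with v̂'(t) = γ·φ(t)·(q(t) − φ(t)·v̂(t)). Then the frequency estimate ω̂(t) = √|v̂(t)| satisfies |ω̂(t) − ω| ≤ (|v̂(0) − ω²|/ω)·exp(−γ·c·t) for all t ≥ 0; in particular ω̂(t) = ω + ε(t) with ε exponentially decaying. -/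
/-- With a persistently exciting regressor (`∫₀ᵗ φ² ≥ c t`), the
gradient estimator of `v = ω²` yields a frequency estimate `ω̂ = √|v̂|` with
exponentially decaying error: `|ω̂(t) - ω| ≤ (|v̂(0) - ω²|/ω) exp(-γ c t)`. -/
theorem frequency_estimate_exponential (γ ω c : ℝ) (hγ : 0 < γ) (hω : 0 < ω)
    (hc : 0 < c)
    (φ : ℝ → ℝ) (hφ : Continuous φ)
    (hPE : ∀ t ≥ (0:ℝ), c * t ≤ ∫ s in (0:ℝ)..t, (φ s) ^ 2)
    (v : ℝ) (hv : v = ω ^ 2)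
    (q : ℝ → ℝ) (hq : ∀ t : ℝ, q t = φ t * v)
    (vhat : ℝ → ℝ)
    (hode : ∀ t ≥ (0:ℝ), HasDerivAt vhat (γ * φ t * (q t - φ t * vhat t)) t)
    (ωhat : ℝ → ℝ) (hωhat : ∀ t : ℝ, ωhat t = Real.sqrt |vhat t|) :
    ∀ t ≥ (0:ℝ), |ωhat t - ω| ≤ (|vhat 0 - ω ^ 2| / ω) * Real.exp (-γ * c * t) := by
  set Φ : ℝ → ℝ := fun t => ∫ s in (0:ℝ)..t, (φ s) ^ 2 with hΦ
  have hφ2 : Continuous fun s => (φ s) ^ 2 := hφ.pow 2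
  have hΦderiv : ∀ t : ℝ, HasDerivAt Φ ((φ t) ^ 2) t := fun t =>
    (hφ2.integral_hasStrictDerivAt 0 t).hasDerivAt
  -- the "energy" function g is constant on [0, ∞)
  set g : ℝ → ℝ := fun t => (vhat t - v) * Real.exp (γ * Φ t) with hg
  have hgderiv : ∀ t ≥ (0:ℝ), HasDerivAt g 0 t := by
    intro t ht
    have h1 : HasDerivAt (fun t => vhat t - v)
        (γ * φ t * (q t - φ t * vhat t)) t := (hode t ht).sub_const v
    have h2 : HasDerivAt (fun t => Real.exp (γ * Φ t))
        ((γ * (φ t) ^ 2) * Real.exp (γ * Φ t)) t := by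
      have := ((hΦderiv t).const_mul γ).exp
      simpa [mul_comm] using this
    have := h1.mul h2
    convert this using 1
    · rfl
    · rfl
    · rfl
    rw [hq t]
    ring
  have hgconst : ∀ t ≥ (0:ℝ), g t = g 0 := by
    intro t ht
    rcases eq_or_lt_of_le ht with h | h
    · rw [← h]
    · have := constant_of_has_deriv_right_zero (f := g) (a := 0) (b := t)
        (fun x hx => ((hgderiv x hx.1).continuousAt).continuousWithinAt)
        (fun x hx => ((hgderiv x hx.1).hasDerivWithinAt))
      exact this t ⟨le_of_lt h, le_refl t⟩
  -- hence exponential decay of the parameter error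
  have hkey : ∀ t ≥ (0:ℝ), |vhat t - v| ≤ |vhat 0 - v| * Real.exp (-γ * c * t) := by
    intro t ht
    have hgt := hgconst t ht
    have hΦ0 : Φ 0 = 0 := by simp [hΦ]
    have hsol : vhat t - v = (vhat 0 - v) * Real.exp (-(γ * Φ t)) := by
      have h : (vhat t - v) * Real.exp (γ * Φ t) = (vhat 0 - v) * Real.exp (γ * Φ 0) := hgt
      rw [hΦ0, mul_zero, Real.exp_zero, mul_one] at h
      rw [Real.exp_neg, ← h]
      field_simp
    rw [hsol, abs_mul, abs_of_pos (Real.exp_pos _)]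
    have hexp : Real.exp (-(γ * Φ t)) ≤ Real.exp (-γ * c * t) := by
      rw [Real.exp_le_exp]
      have hct : c * t ≤ Φ t := hPE t ht
      nlinarith
    exact mul_le_mul_of_nonneg_left hexp (abs_nonneg _)
  intro t ht
  have hωt := hωhat t
  have hA : (0:ℝ) ≤ |vhat t| := abs_nonneg _
  have hsq : Real.sqrt |vhat t| ≥ 0 := Real.sqrt_nonneg _
  -- |√|v̂| - ω| * ω ≤ ||v̂| - ω²| ≤ |v̂ - ω²|
  have hstep : |ωhat t - ω| * ω ≤ |vhat t - ω ^ 2| := by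
    have h1 : |ωhat t - ω| * ω ≤ |ωhat t - ω| * (ωhat t + ω) := by
      have : 0 ≤ ωhat t := by rw [hωt]; exact Real.sqrt_nonneg _
      nlinarith [abs_nonneg (ωhat t - ω)]
    have h2 : |ωhat t - ω| * (ωhat t + ω) = (abs (|vhat t| - ω ^ 2)) := by
      have hpos : 0 ≤ ωhat t + ω := by
        have : 0 ≤ ωhat t := by rw [hωt]; exact Real.sqrt_nonneg _
        linarith
      rw [← abs_of_nonneg hpos, ← abs_mul]
      congr 1
      have hsqr : ωhat t ^ 2 = |vhat t| := by
        rw [hωt]; exact Real.sq_sqrt hA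
      nlinarith
    have h3 : (abs (|vhat t| - ω ^ 2)) ≤ |vhat t - ω ^ 2| := by
      have h := abs_abs_sub_abs_le_abs_sub (vhat t) (ω ^ 2)
      rwa [abs_of_nonneg (sq_nonneg ω)] at h
    calc |ωhat t - ω| * ω ≤ |ωhat t - ω| * (ωhat t + ω) := h1
      _ = (abs (|vhat t| - ω ^ 2)) := h2
      _ ≤ |vhat t - ω ^ 2| := h3
  have hk := hkey t ht
  rw [hv] at hk
  rw [div_mul_eq_mul_div, le_div_iff₀ hω]
  calc |ωhat t - ω| * ω ≤ |vhat t - ω ^ 2| := hstep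
    _ ≤ |vhat 0 - ω ^ 2| * Real.exp (-γ * c * t) := hk
end

section
/- Let m ≥ 1, λ > 0, let Φ : [0,∞) → ℝᵐ be continuous, let 𝒜 ∈ ℝᵐ, and define the scalar output 𝒴(t) = Φ(t)ᵀ𝒜. Let Y : [0,∞) → ℝᵐ and Ω : [0,∞) → ℝ^{m×m} be differentiable and satisfy Y'(t) = −λ·Y(t) + λ·Φ(t)·𝒴(t), Ω'(t) = −λ·Ω(t) + λ·Φ(t)·Φ(t)ᵀ, with Y(0) = 0 and Ω(0) = 0. Then Y(t) = Ω(t)·𝒜 for all t ≥ 0, and consequently adj(Ω(t))·Y(t) = det(Ω(t))·𝒜 for all t ≥ 0, where adj denotes the adjugate matrix. -/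
open Matrix

/-- DREM construction: filtering the regression `𝒴 = Φᵀ𝒜` through the
stable first-order filters `Y' = -λY + λΦ𝒴`, `Ω' = -λΩ + λΦΦᵀ` with zero initial
conditions yields `Y(t) = Ω(t)𝒜`, and hence, multiplying by the adjugate,
`adj(Ω(t))·Y(t) = det(Ω(t))·𝒜` for all `t ≥ 0`. -/
theorem drem_extension_mixing {m : ℕ} (hm : 1 ≤ m) (lam : ℝ) (hlam : 0 < lam)
    (Φ : ℝ → Fin m → ℝ) (hΦ : Continuous Φ)
    (A : Fin m → ℝ)
    (calY : ℝ → ℝ) (hcalY : ∀ t : ℝ, calY t = Φ t ⬝ᵥ A)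
    (Y : ℝ → Fin m → ℝ) (Ω : ℝ → Matrix (Fin m) (Fin m) ℝ)
    (hY : ∀ t ≥ (0:ℝ), HasDerivAt Y (-lam • Y t + (lam * calY t) • Φ t) t)
    (hΩ : ∀ i j, ∀ t ≥ (0:ℝ),
      HasDerivAt (fun s => Ω s i j) (-lam * Ω t i j + lam * (Φ t i * Φ t j)) t)
    (hY0 : Y 0 = 0) (hΩ0 : Ω 0 = 0) :
    ∀ t ≥ (0:ℝ), Y t = (Ω t).mulVec A ∧
      (Ω t).adjugate.mulVec (Y t) = (Ω t).det • A := by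
  intro t ht
  have hmain : Y t = (Ω t).mulVec A := by
    funext i
    set f : ℝ → ℝ := fun s => Y s i - (Ω s).mulVec A i with hfdef
    -- derivative of f
    have hfd : ∀ s ≥ (0:ℝ), HasDerivAt f (-lam * f s) s := by
      intro s hs
      have hYi : HasDerivAt (fun u => Y u i)
          ((-lam • Y s + (lam * calY s) • Φ s) i) s :=
        hasDerivAt_pi.1 (hY s hs) i
      have hΩi : HasDerivAt (fun u => (Ω u).mulVec A i)
          (-lam * (Ω s).mulVec A i + lam * calY s * Φ s i) s := by
        have hsum : HasDerivAt (fun u => ∑ j, Ω u i j * A j)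
            (∑ j, (-lam * Ω s i j + lam * (Φ s i * Φ s j)) * A j) s :=
          HasDerivAt.fun_sum fun j _ => (hΩ i j s hs).mul_const (A j)
        have heq : (∑ j, (-lam * Ω s i j + lam * (Φ s i * Φ s j)) * A j)
            = -lam * (Ω s).mulVec A i + lam * calY s * Φ s i := by
          simp only [Matrix.mulVec, dotProduct, hcalY]
          rw [Finset.sum_congr rfl (fun j _ => by ring :
            ∀ j ∈ Finset.univ, (-lam * Ω s i j + lam * (Φ s i * Φ s j)) * A j
              = -lam * (Ω s i j * A j) + lam * Φ s i * (Φ s j * A j))]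
          rw [Finset.sum_add_distrib, ← Finset.mul_sum, ← Finset.mul_sum]
          ring
        have : (fun u => ∑ j, Ω u i j * A j) = fun u => (Ω u).mulVec A i := by
          funext u; simp [Matrix.mulVec, dotProduct]
        rw [this, heq] at hsum
        exact hsum
      have := hYi.fun_sub hΩi
      refine this.congr_deriv ?_
      simp only [hfdef, Pi.add_apply, Pi.smul_apply, Pi.neg_apply, smul_eq_mul]
      ring
    -- g = exp(lam * s) * f s is constant
    set g : ℝ → ℝ := fun s => Real.exp (lam * s) * f s with hgdef
    have hgd : ∀ s ≥ (0:ℝ), HasDerivAt g 0 s := by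
      intro s hs
      have hexp : HasDerivAt (fun u => Real.exp (lam * u))
          (Real.exp (lam * s) * lam) s := by
        have := ((hasDerivAt_id s).const_mul lam).exp
        simpa [mul_comm] using this
      have := hexp.fun_mul (hfd s hs)
      refine this.congr_deriv ?_
      ring
    have hgt : g t = g 0 := by
      have := constant_of_has_deriv_right_zero (f := g) (a := 0) (b := t)
        (fun s hs => ((hgd s hs.1).continuousAt).continuousWithinAt)
        (fun s hs => (hgd s hs.1).hasDerivWithinAt)
      exact this t ⟨ht, le_rfl⟩
    have hg0 : g 0 = 0 := by
      simp [hgdef, hfdef, hY0, hΩ0]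
    have : f t = 0 := by
      have := hgt.trans hg0
      simpa [hgdef, Real.exp_ne_zero] using this
    have := sub_eq_zero.mp this
    exact this
  refine ⟨hmain, ?_⟩
  rw [hmain, Matrix.mulVec_mulVec, Matrix.adjugate_mul, Matrix.smul_mulVec,
    Matrix.one_mulVec]
end

section
/- Let n ≥ 1, d ≥ 0, let M : ℝ → ℝ^{n×n} and b : ℝ → ℝⁿ be continuous with M bounded, let x, ξ : ℝ → ℝⁿ be differentiable with x'(t) = M(t)x(t) + b(t), ξ'(t) = M(t)ξ(t) + b(t), ξ(0) = 0, and let Φ : ℝ → ℝ^{n×n} be differentiable with Φ'(t) = M(t)Φ(t), Φ(0) = Iₙ. Define the delayed residual g(t) = x(t − d) − ξ(t − d). Then for all t, adj(Φ(t − d))·g(t) = det(Φ(t − d))·x(0); i.e. with R(t) = adj(Φ(t−d))g(t) and P(t) = det(Φ(t−d)), the unknown initial state e₀ = x(0) satisfies the linear regression R(t) = P(t)·e₀. -/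
open Matrix

/-- delayed linear regression for the initial state: with `x`, `ξ`
solutions of `z' = M(t)z + b(t)`, `ξ(0) = 0`, fundamental matrix `Φ`, delay `d ≥ 0`
and delayed residual `g(t) = x(t-d) - ξ(t-d)`, we get
`adj(Φ(t-d))·g(t) = det(Φ(t-d))·x(0)`, i.e. with `R(t) = adj(Φ(t-d))g(t)` and
`P(t) = det(Φ(t-d))`, the unknown `e₀ = x(0)` satisfies `R(t) = P(t)·e₀`. -/
theorem delayed_initial_state_regression {n : ℕ} (hn : 1 ≤ n) (d : ℝ) (hd : 0 ≤ d)
    (M : ℝ → Matrix (Fin n) (Fin n) ℝ) (b : ℝ → Fin n → ℝ)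
    (hMcont : ∀ i j, Continuous fun t => M t i j) (hb : Continuous b)
    (hMbdd : ∃ C : ℝ, ∀ (t : ℝ) (i j : Fin n), |M t i j| ≤ C)
    (x ξ : ℝ → Fin n → ℝ)
    (hx : ∀ t : ℝ, HasDerivAt x ((M t).mulVec (x t) + b t) t)
    (hξ : ∀ t : ℝ, HasDerivAt ξ ((M t).mulVec (ξ t) + b t) t)
    (hξ0 : ξ 0 = 0)
    (Φ : ℝ → Matrix (Fin n) (Fin n) ℝ)
    (hΦ : ∀ (i j : Fin n) (t : ℝ), HasDerivAt (fun s => Φ s i j) ((M t * Φ t) i j) t)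
    (hΦ0 : Φ 0 = 1)
    (g : ℝ → Fin n → ℝ) (hg : ∀ t : ℝ, g t = x (t - d) - ξ (t - d))
    (R : ℝ → Fin n → ℝ) (hR : ∀ t : ℝ, R t = (Φ (t - d)).adjugate.mulVec (g t))
    (P : ℝ → ℝ) (hP : ∀ t : ℝ, P t = (Φ (t - d)).det) :
    (∀ t : ℝ, (Φ (t - d)).adjugate.mulVec (g t) = (Φ (t - d)).det • x 0) ∧
    (∀ t : ℝ, R t = P t • x 0) := by
  obtain ⟨C, hC⟩ := hMbdd
  set C' : ℝ := max C 0 with hC'def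
  have hC'0 : 0 ≤ C' := le_max_right _ _
  have hC' : ∀ (t : ℝ) (i j : Fin n), |M t i j| ≤ C' :=
    fun t i j => le_trans (hC t i j) (le_max_left _ _)
  set K : NNReal := ⟨n * C', by positivity⟩ with hKdef
  -- Lipschitz bound for the vector field
  have hlip : ∀ t : ℝ, LipschitzWith K (fun y : Fin n → ℝ => (M t).mulVec y) := by
    intro t
    apply LipschitzWith.of_dist_le_mul
    intro y z
    rw [dist_pi_le_iff (by positivity)]
    intro i
    have : dist ((M t).mulVec y i) ((M t).mulVec z i)
        = |∑ j, M t i j * (y j - z j)| := by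
      simp [Matrix.mulVec, dotProduct, Real.dist_eq, ← Finset.sum_sub_distrib,
        mul_sub]
    rw [this]
    calc |∑ j, M t i j * (y j - z j)| ≤ ∑ j, |M t i j * (y j - z j)| :=
          Finset.abs_sum_le_sum_abs _ _
      _ ≤ ∑ _j : Fin n, C' * dist y z := by
          apply Finset.sum_le_sum
          intro j _
          rw [abs_mul]
          have h1 : |y j - z j| ≤ dist y z := by
            rw [← Real.dist_eq]; exact dist_le_pi_dist y z j
          exact mul_le_mul (hC' t i j) h1 (abs_nonneg _) hC'0
      _ = (K : ℝ) * dist y z := by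
          simp [hKdef]; exact (mul_assoc (↑n : ℝ) C' (dist y z)).symm
  -- the error e = x - ξ and the candidate h t = Φ t ⬝ x 0 solve the same ODE
  set e : ℝ → Fin n → ℝ := fun t => x t - ξ t with hedef
  have he' : ∀ t : ℝ, HasDerivAt e ((M t).mulVec (e t)) t := by
    intro t
    have := (hx t).sub (hξ t)
    have heq : (M t).mulVec (x t) + b t - ((M t).mulVec (ξ t) + b t)
        = (M t).mulVec (e t) := by
      rw [hedef]; rw [Matrix.mulVec_sub]; abel
    rwa [heq] at this
  set h : ℝ → Fin n → ℝ := fun t => (Φ t).mulVec (x 0) with hhdef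
  have hh' : ∀ t : ℝ, HasDerivAt h ((M t).mulVec (h t)) t := by
    intro t
    rw [hasDerivAt_pi]
    intro i
    have hsum : HasDerivAt (fun s => ∑ j, Φ s i j * x 0 j)
        (∑ j, (M t * Φ t) i j * x 0 j) t := by
      apply HasDerivAt.fun_sum
      intro j _
      exact (hΦ i j t).mul_const (x 0 j)
    have hval : (∑ j, (M t * Φ t) i j * x 0 j) = (M t).mulVec (h t) i := by
      rw [hhdef, Matrix.mulVec_mulVec]
      simp [Matrix.mulVec, dotProduct]
    rw [← hval]
    exact hsum
  have he0 : e 0 = h 0 := by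
    rw [hedef, hhdef]
    simp [hξ0, hΦ0, Matrix.one_mulVec]
  -- uniqueness of ODE solutions gives e = h everywhere
  have key : ∀ s : ℝ, e s = h s := by
    intro s
    have h0mem : (0 : ℝ) ∈ Set.Ioo (-(|s| + 1)) (|s| + 1) := by
      constructor <;> [nlinarith [abs_nonneg s]; nlinarith [abs_nonneg s]]
    have hsmem : s ∈ Set.Ioo (-(|s| + 1)) (|s| + 1) := by
      constructor <;> [nlinarith [neg_abs_le s]; nlinarith [le_abs_self s]]
    exact ODE_solution_unique_of_mem_Ioo
      (fun t _ => (hlip t).lipschitzOnWith (s := Set.univ)) h0mem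
      (fun t _ => ⟨he' t, Set.mem_univ _⟩)
      (fun t _ => ⟨hh' t, Set.mem_univ _⟩) he0 hsmem
  have main : ∀ t : ℝ, (Φ (t - d)).adjugate.mulVec (g t) = (Φ (t - d)).det • x 0 := by
    intro t
    have : g t = (Φ (t - d)).mulVec (x 0) := by
      rw [hg t]
      simpa [hedef, hhdef] using key (t - d)
    rw [this, Matrix.mulVec_mulVec, Matrix.adjugate_mul, Matrix.smul_mulVec,
      Matrix.one_mulVec]
  exact ⟨main, fun t => by rw [hR t, hP t]; exact main t⟩
end

section
/- Let n ≥ 1, γ > 0, let P : [0,∞) → ℝ be continuous, let e₀ ∈ ℝⁿ, and set R(t) = P(t)·e₀. Let ê : [0,∞) → ℝⁿ be differentiable with ê'(t) = −γ·P(t)·(P(t)·ê(t) − R(t)), and let w : [0,∞) → ℝ be differentiable with w'(t) = −γ·P(t)²·w(t), w(0) = 1. Then for all t ≥ 0, ê(t) − w(t)·ê(0) = (1 − w(t))·e₀; consequently, for every t with w(t) < 1, the finite-time estimate ê_FT(t) = (ê(t) − w(t)·ê(0))/(1 − w(t)) equals e₀ exactly. -/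
/-- finite-time estimate: for the regression `R(t) = P(t)·e₀` with
continuous scalar regressor `P`, the gradient law `ê' = -γP(Pê - R)` and the
auxiliary signal `w' = -γP²w`, `w(0) = 1` satisfy
`ê(t) - w(t)ê(0) = (1 - w(t))·e₀`; hence whenever `w(t) < 1`, the finite-time
estimate `ê_FT(t) = (ê(t) - w(t)ê(0))/(1 - w(t))` equals `e₀` exactly. -/
theorem finite_time_parameter_estimate {n : ℕ} (hn : 1 ≤ n) (γ : ℝ) (hγ : 0 < γ)
    (P : ℝ → ℝ) (hP : Continuous P)
    (e₀ : Fin n → ℝ)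
    (R : ℝ → Fin n → ℝ) (hR : ∀ t : ℝ, R t = P t • e₀)
    (ehat : ℝ → Fin n → ℝ)
    (hehat : ∀ t ≥ (0:ℝ), HasDerivAt ehat (-(γ * P t) • (P t • ehat t - R t)) t)
    (w : ℝ → ℝ)
    (hw : ∀ t ≥ (0:ℝ), HasDerivAt w (-γ * (P t) ^ 2 * w t) t) (hw0 : w 0 = 1) :
    ∀ t ≥ (0:ℝ), ehat t - w t • ehat 0 = (1 - w t) • e₀ ∧
      (w t < 1 → (1 - w t)⁻¹ • (ehat t - w t • ehat 0) = e₀) := by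
  -- integrating factor
  set A : ℝ → ℝ := fun t => ∫ s in (0:ℝ)..t, γ * P s ^ 2 with hAdef
  have hPc : Continuous fun s => γ * P s ^ 2 := by continuity
  have hA : ∀ t : ℝ, HasDerivAt A (γ * P t ^ 2) t := fun t =>
    (hPc.integral_hasStrictDerivAt 0 t).hasDerivAt
  set E : ℝ → ℝ := fun t => Real.exp (A t) with hEdef
  have hE : ∀ t : ℝ, HasDerivAt E ((γ * P t ^ 2) * E t) t := fun t => by
    simpa [hEdef, mul_comm] using (hA t).exp
  have hE0 : E 0 = 1 := by simp [hEdef, hAdef]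
  have hEne : ∀ t, E t ≠ 0 := fun t => Real.exp_ne_zero _
  -- generic constancy lemma on [0, t]
  have key : ∀ (f : ℝ → ℝ), (∀ s ≥ (0:ℝ), HasDerivAt f (-γ * P s ^ 2 * f s) s) →
      ∀ t ≥ (0:ℝ), f t * E t = f 0 := by
    intro f hf t ht
    have hderiv : ∀ s ∈ Set.Ico (0:ℝ) t,
        HasDerivWithinAt (fun u => f u * E u) 0 (Set.Ici s) s := by
      intro s hs
      have h : HasDerivAt (fun u => f u * E u) 0 s := by
        have h0 := (hf s hs.1).mul (hE s)
        rw [show (0:ℝ) = -γ * P s ^ 2 * f s * E s + f s * (γ * P s ^ 2 * E s) by ring]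
        exact h0
      exact h.hasDerivWithinAt
    have hcont : ContinuousOn (fun u => f u * E u) (Set.Icc 0 t) := by
      intro s hs
      exact ((hf s hs.1).mul (hE s)).continuousAt.continuousWithinAt
    have := constant_of_has_deriv_right_zero hcont hderiv t (Set.right_mem_Icc.2 ht)
    simpa [hE0] using this
  have hwE : ∀ t ≥ (0:ℝ), w t * E t = 1 := by
    intro t ht
    simpa [hw0] using key w hw t ht
  -- component equations
  have hcomp : ∀ (i : Fin n) (t : ℝ), t ≥ 0 →
      (ehat t i - e₀ i) * E t = ehat 0 i - e₀ i := by
    intro i t ht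
    refine key (fun u => ehat u i - e₀ i) ?_ t ht
    intro s hs
    have h := (hasDerivAt_pi.1 (hehat s hs) i).sub_const (e₀ i)
    have heq : (-(γ * P s) • (P s • ehat s - R s)) i
        = -γ * P s ^ 2 * (ehat s i - e₀ i) := by
      simp [hR, Pi.smul_apply, Pi.sub_apply]
      ring
    simpa [heq] using h
  intro t ht
  have hwt : ∀ i, ehat t i - w t * ehat 0 i = (1 - w t) * e₀ i := by
    intro i
    have h1 := hcomp i t ht
    have h2 := hwE t ht
    -- multiply h1 by w t : (ehat t i - e₀ i) * (E t * w t) = (ehat 0 i - e₀ i) * w t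
    have h3 : ehat t i - e₀ i = (ehat 0 i - e₀ i) * w t := by
      have := congrArg (· * w t) h1
      calc ehat t i - e₀ i = (ehat t i - e₀ i) * (E t * w t) := by
            rw [mul_comm (E t), h2, mul_one]
        _ = (ehat 0 i - e₀ i) * w t := by rw [← mul_assoc, this]
    nlinarith [h3]
  have hmain : ehat t - w t • ehat 0 = (1 - w t) • e₀ := by
    funext i
    simpa using hwt i
  refine ⟨hmain, fun hlt => ?_⟩
  rw [hmain, smul_smul, inv_mul_cancel₀ (by linarith), one_smul]
end

section
/- Let n ≥ 1, γ > 0, d ≥ 0, let M : ℝ → ℝ^{n×n} and b : ℝ → ℝⁿ be continuous with M bounded, let x, ξ : ℝ → ℝⁿ be differentiable with x'(t) = M(t)x(t) + b(t), ξ'(t) = M(t)ξ(t) + b(t), ξ(0) = 0, and let Φ : ℝ → ℝ^{n×n} be differentiable with Φ'(t) = M(t)Φ(t), Φ(0) = Iₙ. Define g(t) = x(t−d) − ξ(t−d), P(t) = det(Φ(t−d)), R(t) = adj(Φ(t−d))·g(t). Let ê : [0,∞) → ℝⁿ be differentiable with ê'(t) = −γ·P(t)·(P(t)·ê(t) − R(t))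 and w : [0,∞) → ℝ differentiable with w'(t) = −γ·P(t)²·w(t), w(0) = 1. Then for every t ≥ 0 with w(t) < 1, the state estimate x̂(t) = ξ(t) + Φ(t)·(ê(t) − w(t)·ê(0))/(1 − w(t)) satisfies x̂(t) = x(t). -/
open Matrix

/-- finite-time GPEBO state reconstruction under delayed
measurements: the plant `x' = M(t)x + b(t)` (with `M` continuous and bounded), its
open-loop copy `ξ` with `ξ(0) = 0`, the fundamental matrix `Φ` (`Φ' = MΦ`,
`Φ(0) = I`), the delayed residual `g(t) = x(t-d) - ξ(t-d)`, the regression signals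
`P(t) = det(Φ(t-d))`, `R(t) = adj(Φ(t-d))·g(t)`, the gradient estimate `ê` of the
initial condition (`ê' = -γP(Pê - R)`) and the auxiliary signal `w`
(`w' = -γP²w`, `w(0) = 1`): for every `t ≥ 0` with `w(t) < 1`, the state estimate
`x̂(t) = ξ(t) + Φ(t)·(ê(t) - w(t)ê(0))/(1 - w(t))` equals `x(t)` exactly. -/
theorem gpebo_finite_time_state_observer {n : ℕ} (hn : 1 ≤ n) (γ d : ℝ)
    (hγ : 0 < γ) (hd : 0 ≤ d)
    (M : ℝ → Matrix (Fin n) (Fin n) ℝ) (b : ℝ → Fin n → ℝ)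
    (hMcont : ∀ i j, Continuous fun t => M t i j) (hb : Continuous b)
    (hMbdd : ∃ C : ℝ, ∀ (t : ℝ) (i j : Fin n), |M t i j| ≤ C)
    (x ξ : ℝ → Fin n → ℝ)
    (hx : ∀ t : ℝ, HasDerivAt x ((M t).mulVec (x t) + b t) t)
    (hξ : ∀ t : ℝ, HasDerivAt ξ ((M t).mulVec (ξ t) + b t) t)
    (hξ0 : ξ 0 = 0)
    (Φ : ℝ → Matrix (Fin n) (Fin n) ℝ)
    (hΦ : ∀ (i j : Fin n) (t : ℝ), HasDerivAt (fun s => Φ s i j) ((M t * Φ t) i j) t)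
    (hΦ0 : Φ 0 = 1)
    (g : ℝ → Fin n → ℝ) (hg : ∀ t : ℝ, g t = x (t - d) - ξ (t - d))
    (P : ℝ → ℝ) (hP : ∀ t : ℝ, P t = (Φ (t - d)).det)
    (R : ℝ → Fin n → ℝ) (hR : ∀ t : ℝ, R t = (Φ (t - d)).adjugate.mulVec (g t))
    (ehat : ℝ → Fin n → ℝ)
    (hehat : ∀ t ≥ (0:ℝ), HasDerivAt ehat (-(γ * P t) • (P t • ehat t - R t)) t)
    (w : ℝ → ℝ)
    (hw : ∀ t ≥ (0:ℝ), HasDerivAt w (-γ * (P t) ^ 2 * w t) t) (hw0 : w 0 = 1) :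
    ∀ t ≥ (0:ℝ), w t < 1 →
      ξ t + (Φ t).mulVec ((1 - w t)⁻¹ • (ehat t - w t • ehat 0)) = x t := by
  obtain ⟨C₀, hC₀⟩ := hMbdd
  set C := max C₀ 0 with hCdef
  have hC' : ∀ (t : ℝ) (i j : Fin n), |M t i j| ≤ C := fun t i j =>
    (hC₀ t i j).trans (le_max_left _ _)
  have hCnn : (0:ℝ) ≤ C := le_max_right _ _
  set K : NNReal := Real.toNNReal (n * C) with hKdef
  have hK : (K : ℝ) = n * C := Real.coe_toNNReal _ (by positivity)
  -- Lipschitz bound for mulVec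
  have key : ∀ (A : Matrix (Fin n) (Fin n) ℝ) (v : Fin n → ℝ),
      (∀ i j, |A i j| ≤ C) → ‖A.mulVec v‖ ≤ n * C * ‖v‖ := by
    intro A v hA
    rw [pi_norm_le_iff_of_nonneg (by positivity)]
    intro i
    calc ‖A.mulVec v i‖ = |∑ j, A i j * v j| := by
          simp [Matrix.mulVec, dotProduct, Real.norm_eq_abs]
      _ ≤ ∑ j, |A i j * v j| := Finset.abs_sum_le_sum_abs _ _
      _ ≤ ∑ _j : Fin n, C * ‖v‖ := Finset.sum_le_sum (fun j _ => by
          rw [abs_mul]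
          exact mul_le_mul (hA i j) ((Real.norm_eq_abs (v j)) ▸ norm_le_pi_norm v j)
            (abs_nonneg _) hCnn)
      _ = n * C * ‖v‖ := by simp [Finset.sum_const, Finset.card_univ]; ring
  have hlip : ∀ t, LipschitzWith K (fun y : Fin n → ℝ => (M t).mulVec y) := by
    intro t
    apply LipschitzWith.of_dist_le_mul
    intro y z
    rw [dist_eq_norm, dist_eq_norm, ← Matrix.mulVec_sub, hK]
    exact key _ _ (hC' t)
  set x0 : Fin n → ℝ := x 0 with hx0def
  -- the error e = x - ξ satisfies e' = M e
  have he : ∀ t, HasDerivAt (fun s => x s - ξ s) ((M t).mulVec (x t - ξ t)) t := by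
    intro t
    have h := (hx t).sub (hξ t)
    have heq : (M t).mulVec (x t) + b t - ((M t).mulVec (ξ t) + b t)
        = (M t).mulVec (x t - ξ t) := by
      rw [Matrix.mulVec_sub]; abel
    rwa [heq] at h
  have hk : ∀ t, HasDerivAt (fun s => (Φ s).mulVec x0) ((M t).mulVec ((Φ t).mulVec x0)) t := by
    intro t
    rw [Matrix.mulVec_mulVec]
    rw [hasDerivAt_pi]
    intro i
    simp only [Matrix.mulVec, dotProduct]
    exact HasDerivAt.fun_sum fun j _ => (hΦ i j t).mul_const _
  -- uniqueness: e t = Φ t • x0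
  have hek : ∀ s : ℝ, x s - ξ s = (Φ s).mulVec x0 := by
    intro s
    have h0 : x 0 - ξ 0 = (Φ 0).mulVec x0 := by
      simp [hξ0, hΦ0, Matrix.one_mulVec, hx0def]
    have h0mem : (0:ℝ) ∈ Set.Ioo (-(|s|+1)) (|s|+1) := by
      constructor <;> nlinarith [abs_nonneg s]
    have hmem : s ∈ Set.Icc (-(|s|+1)) (|s|+1) := by
      constructor <;> nlinarith [neg_abs_le s, le_abs_self s]
    exact ODE_solution_unique_of_mem_Icc (v := fun t y => (M t).mulVec y)
      (s := fun _ => Set.univ) (fun t _ => (hlip t).lipschitzOnWith) h0mem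
      (fun u _ => (he u).continuousAt.continuousWithinAt)
      (fun u _ => he u) (fun u _ => trivial)
      (fun u _ => (hk u).continuousAt.continuousWithinAt)
      (fun u _ => hk u) (fun u _ => trivial) h0 hmem
  -- R t = P t • x0
  have hR' : ∀ t : ℝ, R t = P t • x0 := by
    intro t
    rw [hR, hg, hek (t - d), Matrix.mulVec_mulVec, Matrix.adjugate_mul, hP,
      Matrix.smul_mulVec, Matrix.one_mulVec]
  -- continuity of P and the integrating factor F
  have hPcont : Continuous P := by
    have hΦc : Continuous Φ := continuous_pi fun i => continuous_pi fun j =>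
      continuous_iff_continuousAt.2 fun t => (hΦ i j t).continuousAt
    have h2 : Continuous fun t => (Φ (t - d)).det :=
      (hΦc.comp (continuous_sub_right d)).matrix_det
    have : P = fun t => (Φ (t - d)).det := funext hP
    rw [this]; exact h2
  set F : ℝ → ℝ := fun t => ∫ s in (0:ℝ)..t, γ * (P s)^2 with hFdef
  have hFd : ∀ t, HasDerivAt F (γ * (P t)^2) t := fun t =>
    ((continuous_const.mul (hPcont.pow 2)).integral_hasStrictDerivAt 0 t).hasDerivAt
  -- the deviation q
  set q : ℝ → Fin n → ℝ := fun t => ehat t - x0 - w t • (ehat 0 - x0) with hqdef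
  have hq0 : q 0 = 0 := by
    simp [hqdef, hw0]
  have hqd : ∀ t ≥ (0:ℝ), HasDerivAt q (-(γ * (P t)^2) • q t) t := by
    intro t ht
    have h1 := ((hehat t ht).sub_const x0).sub ((hw t ht).smul_const (ehat 0 - x0))
    refine h1.congr_deriv ?_
    rw [hR' t]
    funext i
    simp only [hqdef, Pi.smul_apply, Pi.sub_apply, Pi.neg_apply, smul_eq_mul, Pi.add_apply, neg_smul]
    ring
  have hqzero : ∀ t ≥ (0:ℝ), q t = 0 := by
    intro t ht
    funext i
    have hGi : ∀ s ≥ (0:ℝ), HasDerivAt (fun u => q u i * Real.exp (F u)) 0 s := by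
      intro s hs
      have h1 : HasDerivAt (fun u => q u i) ((-(γ * (P s)^2) • q s) i) s :=
        hasDerivAt_pi.1 (hqd s hs) i
      have h2 : HasDerivAt (fun u => Real.exp (F u)) (Real.exp (F s) * (γ * (P s)^2)) s :=
        (Real.hasDerivAt_exp (F s)).comp s (hFd s)
      have h3 := h1.mul h2
      refine h3.congr_deriv ?_
      simp only [Pi.smul_apply, smul_eq_mul, neg_smul, neg_mul]
      ring
    have hcont : ContinuousOn (fun u => q u i * Real.exp (F u)) (Set.Icc 0 t) :=
      fun s hs => ((hGi s hs.1).continuousAt).continuousWithinAt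
    have hconst := constant_of_has_deriv_right_zero hcont
      (fun s hs => (hGi s hs.1).hasDerivWithinAt) t (Set.mem_Icc.2 ⟨ht, le_rfl⟩)
    have h0 : q 0 i = 0 := by rw [hq0]; rfl
    rw [h0, zero_mul] at hconst
    have := (mul_eq_zero.1 hconst).resolve_right (Real.exp_ne_zero _)
    simpa using this
  -- conclusion
  intro t ht hwt
  have hne : (1 - w t) ≠ 0 := sub_ne_zero.2 (by linarith)
  have hzt := hqzero t ht
  have h2 : ehat t - w t • ehat 0 = (1 - w t) • x0 := by
    funext i
    have hq1 := congrFun hzt i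
    simp only [hqdef, Pi.sub_apply, Pi.smul_apply, smul_eq_mul, Pi.zero_apply] at hq1
    simp only [Pi.sub_apply, Pi.smul_apply, smul_eq_mul]
    linear_combination hq1
  rw [h2, inv_smul_smul₀ hne, ← hek t]
  abel
end
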